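/- Let R be a finite commutative chain ring with residue field 𝔽₂ and maximal ideal ⟨s⟩ of nilpotency index t, G cyclic of odd order generated by commuting generators with a distinguished element a of order p^n (p odd prime dividing |G|), and e = \widehat{H'} − \widehat{H} where H = (subgroup with a replaced by a^{p^j}) and H' = (subgroup with a replaced by a^{p^{j-1}}), H ⊆ H'. Then the minimum weight of the code ⟨s^k e⟩ equals 2·|H|, i.e., twice the index-adjusted subgroup size. -/

import Mathlib

open MonoidAlgebra Finset

section Aux
variable {R : Type*} [CommRing R] {G : Type*} [CommGroup G] [Fintype G]

noncomputable def sig (R : Type*) [CommRing R] {G : Type*} [CommGroup G] [Fintype G]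
    (L : Subgroup G) : MonoidAlgebra R G :=
  ∑ h ∈ (L : Set G).toFinite.toFinset, MonoidAlgebra.single h (1 : R)

lemma card_toFinset (L : Subgroup G) : ((L : Set G).toFinite.toFinset).card = Nat.card L := by
  rw [← Set.ncard_eq_toFinset_card, ← Nat.card_coe_set_eq]; rfl

open scoped Classical in
lemma sig_apply (L : Subgroup G) (x : G) :
    (sig R L).coeff x = if x ∈ L then (1 : R) else 0 := by
  classical
  rw [sig, MonoidAlgebra.coeff_sum, Finsupp.finset_sum_apply]
  simp only [MonoidAlgebra.single_apply]
  rw [Finset.sum_ite_eq']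
  by_cases hx : x ∈ L
  · rw [if_pos (by simpa [Set.Finite.mem_toFinset] using hx), if_pos hx]
  · rw [if_neg (by simpa [Set.Finite.mem_toFinset] using hx), if_neg hx]

lemma sig_mul_single (L : Subgroup G) {h : G} (hh : h ∈ L) :
    sig R L * MonoidAlgebra.single h (1 : R) = sig R L := by
  classical
  rw [sig, Finset.sum_mul]
  simp only [MonoidAlgebra.single_mul_single, mul_one]
  refine Finset.sum_nbij' (fun g => g * h) (fun g => g * h⁻¹) ?_ ?_ ?_ ?_ ?_
  · intro g hg
    simp only [Set.Finite.mem_toFinset, SetLike.mem_coe] at *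
    exact L.mul_mem hg hh
  · intro g hg
    simp only [Set.Finite.mem_toFinset, SetLike.mem_coe] at *
    exact L.mul_mem hg (L.inv_mem hh)
  · intro g _; group
  · intro g _; group
  · intro g _; rfl

lemma single_mul_sig (L : Subgroup G) {h : G} (hh : h ∈ L) :
    MonoidAlgebra.single h (1 : R) * sig R L = sig R L := by
  rw [mul_comm]; exact sig_mul_single L hh

lemma sig_mul_sig {L L' : Subgroup G} (hLL' : L ≤ L') :
    sig R L * sig R L' = (Nat.card L : R) • sig R L' := by
  classical
  rw [sig, Finset.sum_mul]
  rw [Finset.sum_congr rfl (fun h hh => single_mul_sig L' (hLL' (by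
    simpa [Set.Finite.mem_toFinset] using hh)))]
  rw [Finset.sum_const, card_toFinset, ← Nat.cast_smul_eq_nsmul R]

end Aux


lemma odd_cast_isUnit {R : Type*} [CommRing R] [IsLocalRing R]
    (hres : Nat.card (R ⧸ IsLocalRing.maximalIdeal R) = 2)
    {m : ℕ} (hm : Odd m) : IsUnit (m : R) := by
  by_contra hnu
  have hmem : (m : R) ∈ IsLocalRing.maximalIdeal R := hnu
  have h0 : (m : R ⧸ IsLocalRing.maximalIdeal R) = 0 := by
    have := (Ideal.Quotient.eq_zero_iff_mem).mpr hmem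
    simpa using this
  -- residue field: char facts
  set K := R ⧸ IsLocalRing.maximalIdeal R
  have h2 : (2 : K) = 0 := by
    have h := @card_nsmul_eq_zero' K _ 1
    rw [hres] at h
    simpa [two_smul, one_add_one_eq_two] using h
  obtain ⟨c, hc⟩ := hm
  have : (m : K) = 1 := by
    have : ((2 * c + 1 : ℕ) : K) = 1 := by
      push_cast
      erw [Nat.cast_mul, Nat.cast_ofNat, h2]; ring
    rwa [hc]
  rw [h0] at this
  exact zero_ne_one this


lemma pow_not_mem_H {G : Type*} [CommGroup G] {p n : ℕ} (hp : p.Prime)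
    {a : G} (hord : orderOf a = p ^ n) {B : Subgroup G}
    (hcompl : B.IsComplement' (Subgroup.zpowers a)) {j : ℕ} (hj1 : 1 ≤ j) (hjn : j ≤ n) :
    a ^ p ^ (j - 1) ∉ B ⊔ Subgroup.zpowers (a ^ p ^ j) := by
  intro hmem
  rw [Subgroup.mem_sup] at hmem
  obtain ⟨b, hb, z, hz, hbz⟩ := hmem
  obtain ⟨m, hm⟩ := hz
  have hba : b ∈ Subgroup.zpowers a := by
    have : b = a ^ p ^ (j - 1) * z⁻¹ := by
      rw [← hbz]; group
    rw [this]
    have hz' : z ∈ Subgroup.zpowers a := by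
      rw [← hm]
      exact Subgroup.zpow_mem _ (Subgroup.pow_mem _ (Subgroup.mem_zpowers a) _) _
    exact Subgroup.mul_mem _ (Subgroup.pow_mem _ (Subgroup.mem_zpowers a) _)
      (Subgroup.inv_mem _ hz')
  have hb1 : b = 1 := by
    have hd := hcompl.disjoint
    have : b ∈ B ⊓ Subgroup.zpowers a := ⟨hb, hba⟩
    rwa [hd.eq_bot, Subgroup.mem_bot] at this
  rw [hb1, one_mul] at hbz
  rw [← hm] at hbz
  change (a ^ p ^ j) ^ m = a ^ p ^ (j - 1) at hbz
  have hzp : a ^ (((p ^ j : ℕ) : ℤ) * m) = a ^ (((p ^ (j - 1) : ℕ)) : ℤ) := by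
    rw [zpow_mul, zpow_natCast, zpow_natCast]; exact hbz
  rw [zpow_eq_zpow_iff_modEq, hord] at hzp
  have hdvd : ((p : ℤ) ^ n) ∣ ((p : ℤ) ^ j * m - (p : ℤ) ^ (j - 1)) := by
    have := Int.ModEq.dvd hzp.symm
    push_cast at this
    exact this
  have hj : (p : ℤ) ^ (j - 1) * p = (p : ℤ) ^ j := by
    rw [← pow_succ]; congr 1; omega
  have hdvd2 : ((p : ℤ) ^ (j - 1) * p) ∣ ((p : ℤ) ^ (j - 1)) * (p * m - 1) := by
    have h1 : ((p : ℤ) ^ (j - 1) * p) ∣ (p : ℤ) ^ n := by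
      rw [hj]; exact pow_dvd_pow _ hjn
    refine dvd_trans h1 ?_
    have heq : (p : ℤ) ^ (j - 1) * (p * m - 1) = (p : ℤ) ^ j * m - (p : ℤ) ^ (j - 1) := by
      rw [mul_sub, mul_one, ← mul_assoc, hj]
    rw [heq]; exact hdvd
  have hp0 : ((p : ℤ) ^ (j - 1)) ≠ 0 := pow_ne_zero _ (by exact_mod_cast hp.ne_zero)
  have hpd : (p : ℤ) ∣ (p * m - 1) := (mul_dvd_mul_iff_left hp0).mp hdvd2
  have hone : (p : ℤ) ∣ 1 := by
    have h2 : (p : ℤ) ∣ (p * m) := ⟨m, rfl⟩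
    have := dvd_sub h2 hpd
    simpa using this
  have hle := Int.le_of_dvd one_pos hone
  have := hp.one_lt
  omega


/-- Let `R` be a finite commutative chain ring with residue field `𝔽₂` and maximal ideal
`⟨s⟩` of nilpotency index `t`, and `G` a finite commutative group of odd order containing
a distinguished element `a` of order `p^n` (`p` an odd prime) with complement `B`
(so `G = B × ⟨a⟩`). For `H = B ⊔ ⟨a^(p^j)⟩ ⊆ H' = B ⊔ ⟨a^(p^(j-1))⟩` and
`e = Ĥ' − Ĥ`, the minimum weight of the code `⟨s^k e⟩` equals `2·|H|`. -/
theorem min_weight_code_hat_difference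
    (R : Type*) [CommRing R] [Finite R] [IsLocalRing R]
    (hchain : ∀ I J : Ideal R, I ≤ J ∨ J ≤ I)
    (hres : Nat.card (R ⧸ IsLocalRing.maximalIdeal R) = 2)
    (s : R) (hM : IsLocalRing.maximalIdeal R = Ideal.span {s})
    (t : ℕ) (ht : 1 ≤ t) (hst : s ^ t = 0) (hst' : s ^ (t - 1) ≠ 0)
    (G : Type*) [CommGroup G] [Fintype G] (hodd : Odd (Fintype.card G))
    (p n : ℕ) (hp : p.Prime) (hpodd : Odd p) (hpdvd : p ∣ Fintype.card G)
    (a : G) (hord : orderOf a = p ^ n)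
    (B : Subgroup G) (hcompl : B.IsComplement' (Subgroup.zpowers a))
    (j : ℕ) (hj1 : 1 ≤ j) (hjn : j ≤ n) (k : ℕ) (hk : k < t) :
    let hat : Subgroup G → MonoidAlgebra R G := fun L =>
      Ring.inverse ((Nat.card L : R)) •
        ∑ h ∈ (L : Set G).toFinite.toFinset, MonoidAlgebra.single h (1 : R)
    let H : Subgroup G := B ⊔ Subgroup.zpowers (a ^ p ^ j)
    let H' : Subgroup G := B ⊔ Subgroup.zpowers (a ^ p ^ (j - 1))
    let e : MonoidAlgebra R G := hat H' - hat H
    let C : Ideal (MonoidAlgebra R G) := Ideal.span {s ^ k • e}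
    (∃ α ∈ C, α ≠ 0 ∧ (α : MonoidAlgebra R G).coeff.support.card = 2 * Nat.card H) ∧
      (∀ α ∈ C, α ≠ 0 → 2 * Nat.card H ≤ (α : MonoidAlgebra R G).coeff.support.card) := by

  classical
  intro hat H H' e C
  -- basic facts
  have hHH' : H ≤ H' := by
    refine sup_le le_sup_left ?_
    rw [Subgroup.zpowers_le]
    refine Subgroup.mem_sup_right ?_
    have hpow : a ^ p ^ j = (a ^ p ^ (j - 1)) ^ p := by
      rw [← pow_mul]
      congr 1
      rw [← pow_succ]
      congr 1
      omega
    rw [hpow]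
    exact Subgroup.pow_mem _ (Subgroup.mem_zpowers _) _
  have hoddL : ∀ L : Subgroup G, Odd (Nat.card L) := by
    intro L
    have hdvd : Nat.card ↥L ∣ Fintype.card G := by
      simpa [Nat.card_eq_fintype_card] using Subgroup.card_subgroup_dvd_card L
    rcases Nat.even_or_odd (Nat.card ↥L) with hev | hodd'
    · exfalso
      obtain ⟨c, hc⟩ := hev
      have h2 : (2 : ℕ) ∣ Fintype.card G := dvd_trans ⟨c, by omega⟩ hdvd
      obtain ⟨d, hd⟩ := h2
      obtain ⟨m, hm⟩ := hodd
      omega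
    · exact hodd'
  have hunit : ∀ L : Subgroup G, IsUnit ((Nat.card L : R)) := fun L =>
    odd_cast_isUnit hres (hoddL L)
  set u : R := Ring.inverse ((Nat.card H : R)) with hu
  set u' : R := Ring.inverse ((Nat.card H' : R)) with hu'
  have he : e = u' • sig R H' - u • sig R H := rfl
  have he_single : ∀ h ∈ H, e * MonoidAlgebra.single h (1 : R) = e := by
    intro h hh
    rw [he, sub_mul, smul_mul_assoc, smul_mul_assoc, sig_mul_single H' (hHH' hh),
      sig_mul_single H hh]
  have he_sig : e * sig R H' = 0 := by
    rw [he, sub_mul, smul_mul_assoc, smul_mul_assoc, sig_mul_sig (le_refl H'),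
      sig_mul_sig hHH', smul_smul, smul_smul,
      Ring.inverse_mul_cancel _ (hunit H'), Ring.inverse_mul_cancel _ (hunit H),
      one_smul, sub_self]
  have hsk : s ^ k ≠ 0 := by
    intro h0
    apply hst'
    have hsplit : s ^ (t - 1) = s ^ k * s ^ (t - 1 - k) := by
      rw [← pow_add]
      congr 1
      omega
    rw [hsplit, h0, zero_mul]
  have hcard1 : u * (Nat.card H : R) = 1 := Ring.inverse_mul_cancel _ (hunit H)
  set c : R := s ^ k * u with hcdef
  have hc : c ≠ 0 := by
    intro h0
    apply hsk
    calc s ^ k = s ^ k * (u * (Nat.card H : R)) := by rw [hcard1, mul_one]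
      _ = c * (Nat.card H : R) := by rw [hcdef]; ring
      _ = 0 := by rw [h0, zero_mul]
  set g' : G := a ^ p ^ (j - 1) with hg'def
  have hg'H' : g' ∈ H' := Subgroup.mem_sup_right (Subgroup.mem_zpowers _)
  have hgH : a ^ p ^ j ∈ H := Subgroup.mem_sup_right (Subgroup.mem_zpowers _)
  have hg'H : g' ∉ H := pow_not_mem_H hp hord hcompl hj1 hjn
  have hdisj : ∀ x : G, x ∈ H → g'⁻¹ * x ∈ H → False := by
    intro x h1 h2
    apply hg'H
    have hgx : g' = x * (g'⁻¹ * x)⁻¹ := by group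
    rw [hgx]
    exact H.mul_mem h1 (H.inv_mem h2)
  set T : Finset G := (H : Set G).toFinite.toFinset with hT
  have hmemT : ∀ x : G, x ∈ T ↔ x ∈ H := by
    intro x; rw [hT, Set.Finite.mem_toFinset]; rfl
  constructor
  · -- existence of an element of weight 2|H|
    set α₀ : MonoidAlgebra R G :=
      (MonoidAlgebra.single g' (1:R) - MonoidAlgebra.single (a ^ p ^ j) (1:R)) * (s ^ k • e)
      with hα₀def
    refine ⟨α₀, Ideal.mem_span_singleton'.mpr ⟨_, rfl⟩, ?_, ?_⟩
    swap
    · -- compute α₀ and its support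
      have hstep : α₀ = c • (sig R H - MonoidAlgebra.single g' (1:R) * sig R H) := by
        rw [hα₀def, mul_smul_comm, sub_mul]
        have h1 : MonoidAlgebra.single (a ^ p ^ j) (1:R) * e = e := by
          rw [mul_comm]; exact he_single _ hgH
        have h2 : MonoidAlgebra.single g' (1:R) * e =
            u' • sig R H' - u • (MonoidAlgebra.single g' (1:R) * sig R H) := by
          rw [he, mul_sub, mul_smul_comm, mul_smul_comm, single_mul_sig H' hg'H']
        rw [h1, h2, he, hcdef]
        module
      have hcoef : ∀ x : G, α₀.coeff x =
          c * ((if x ∈ H then (1:R) else 0) - (if g'⁻¹ * x ∈ H then (1:R) else 0)) := by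
        intro x
        rw [hstep]
        rw [MonoidAlgebra.coeff_smul, MonoidAlgebra.coeff_sub, Finsupp.smul_apply, Finsupp.sub_apply]
        rw [sig_apply, MonoidAlgebra.single_mul_apply, sig_apply, one_mul, smul_eq_mul]
      have hsupp : α₀.coeff.support = T ∪ T.image (fun h => g' * h) := by
        ext x
        rw [Finsupp.mem_support_iff, hcoef]
        simp only [Finset.mem_union, Finset.mem_image, hmemT]
        constructor
        · intro hx
          by_cases h1 : x ∈ H
          · exact Or.inl h1
          · by_cases h2 : g'⁻¹ * x ∈ H
            · exact Or.inr ⟨g'⁻¹ * x, h2, by group⟩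
            · exfalso; apply hx; rw [if_neg h1, if_neg h2, sub_self, mul_zero]
        · rintro (h1 | ⟨h2, hh2, rfl⟩)
          · rw [if_pos h1, if_neg (fun h2 => hdisj x h1 h2), sub_zero, mul_one]
            exact hc
          · have hx2 : g'⁻¹ * (g' * h2) ∈ H := by
              rw [inv_mul_cancel_left]; exact hh2
            have hx1 : g' * h2 ∉ H := by
              intro hmem
              exact hdisj _ hmem hx2
            rw [if_neg hx1, if_pos hx2, zero_sub, mul_neg, mul_one]
            exact neg_ne_zero.mpr hc
      have hdisjT : Disjoint T (T.image (fun h => g' * h)) := by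
        rw [Finset.disjoint_left]
        intro x hx hx2
        obtain ⟨h2, hh2, rfl⟩ := Finset.mem_image.mp hx2
        refine hdisj _ ((hmemT _).mp hx) ?_
        rw [inv_mul_cancel_left]
        exact (hmemT _).mp hh2
      rw [hsupp, Finset.card_union_of_disjoint hdisjT,
        Finset.card_image_of_injective _ (mul_right_injective g'), hT, card_toFinset,
        two_mul]
    · -- α₀ ≠ 0 : its support is nonempty
      intro h0
      have h1 : α₀.coeff 1 ≠ 0 := by
        have hcoef1 : α₀.coeff 1 = c := by
          have hstep : α₀ = c • (sig R H - MonoidAlgebra.single g' (1:R) * sig R H) := by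
            rw [hα₀def, mul_smul_comm, sub_mul]
            have h1 : MonoidAlgebra.single (a ^ p ^ j) (1:R) * e = e := by
              rw [mul_comm]; exact he_single _ hgH
            have h2 : MonoidAlgebra.single g' (1:R) * e =
                u' • sig R H' - u • (MonoidAlgebra.single g' (1:R) * sig R H) := by
              rw [he, mul_sub, mul_smul_comm, mul_smul_comm, single_mul_sig H' hg'H']
            rw [h1, h2, he, hcdef]
            module
          rw [hstep, MonoidAlgebra.coeff_smul, MonoidAlgebra.coeff_sub, Finsupp.smul_apply, Finsupp.sub_apply, sig_apply,
            MonoidAlgebra.single_mul_apply, sig_apply, one_mul]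
          rw [if_pos H.one_mem, if_neg (fun hmem => hdisj 1 H.one_mem hmem), sub_zero,
            smul_eq_mul, mul_one]
        rw [hcoef1]; exact hc
      rw [h0] at h1
      exact h1 rfl
  · -- lower bound
    intro α hα hα0
    obtain ⟨β, hβ⟩ := Ideal.mem_span_singleton'.mp hα
    have hαe : ∀ h ∈ H, α * MonoidAlgebra.single h (1:R) = α := by
      intro h hh
      rw [← hβ, mul_assoc, smul_mul_assoc, he_single h hh]
    have hinv : ∀ h ∈ H, ∀ x : G, α.coeff (x * h) = α.coeff x := by
      intro h hh x
      have hev := congrArg (fun f : MonoidAlgebra R G => f.coeff (x * h)) (hαe h hh)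
      simp only [MonoidAlgebra.mul_single_apply, mul_one, mul_inv_cancel_right] at hev
      exact hev.symm
    have hker : α * sig R H' = 0 := by
      rw [← hβ, mul_assoc, smul_mul_assoc, he_sig, smul_zero, mul_zero]
    obtain ⟨g, hg⟩ := (Finsupp.support_nonempty_iff (f := α.coeff)).mpr (by simpa using hα0)
    have hgne : α.coeff g ≠ 0 := Finsupp.mem_support_iff.mp hg
    by_cases hcase : ∃ g₂ ∈ α.coeff.support, g⁻¹ * g₂ ∉ H
    · obtain ⟨g₂, hg₂, hg₂H⟩ := hcase
      have hg₂ne : α.coeff g₂ ≠ 0 := Finsupp.mem_support_iff.mp hg₂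
      set S1 : Finset G := T.image (fun h => g * h) with hS1
      set S2 : Finset G := T.image (fun h => g₂ * h) with hS2
      have hS1sub : S1 ⊆ α.coeff.support := by
        intro x hx
        obtain ⟨h, hh, rfl⟩ := Finset.mem_image.mp hx
        rw [Finsupp.mem_support_iff, hinv h ((hmemT h).mp hh) g]
        exact hgne
      have hS2sub : S2 ⊆ α.coeff.support := by
        intro x hx
        obtain ⟨h, hh, rfl⟩ := Finset.mem_image.mp hx
        rw [Finsupp.mem_support_iff, hinv h ((hmemT h).mp hh) g₂]
        exact hg₂ne
      have hdisj12 : Disjoint S1 S2 := by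
        rw [Finset.disjoint_left]
        intro x hx1 hx2
        obtain ⟨h1, hh1, rfl⟩ := Finset.mem_image.mp hx1
        obtain ⟨h2, hh2, heq⟩ := Finset.mem_image.mp hx2
        apply hg₂H
        have : g⁻¹ * g₂ = h1 * h2⁻¹ := by
          have h' : g₂ = g * h1 * h2⁻¹ := by rw [← heq]; group
          rw [h']; group
        rw [this]
        exact H.mul_mem ((hmemT h1).mp hh1) (H.inv_mem ((hmemT h2).mp hh2))
      calc 2 * Nat.card H = S1.card + S2.card := by
            rw [hS1, hS2, Finset.card_image_of_injective _ (mul_right_injective g),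
              Finset.card_image_of_injective _ (mul_right_injective g₂), hT,
              card_toFinset, two_mul]
        _ = (S1 ∪ S2).card := (Finset.card_union_of_disjoint hdisj12).symm
        _ ≤ α.coeff.support.card := Finset.card_le_card (Finset.union_subset hS1sub hS2sub)
    · -- support contained in one coset : contradiction
      exfalso
      push_neg at hcase
      have hval : (α * sig R H').coeff g = 0 := by rw [hker]; rfl
      have hexp : (α * sig R H').coeff g =
          ∑ h' ∈ (H' : Set G).toFinite.toFinset, α.coeff (g * h'⁻¹) := by
        rw [sig, Finset.mul_sum, MonoidAlgebra.coeff_sum, Finsupp.finset_sum_apply]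
        refine Finset.sum_congr rfl (fun h' _ => ?_)
        rw [MonoidAlgebra.mul_single_apply, mul_one]
      have hterm : ∀ h' ∈ (H' : Set G).toFinite.toFinset,
          α.coeff (g * h'⁻¹) = if h' ∈ H then α.coeff g else 0 := by
        intro h' _
        by_cases hh : h' ∈ H
        · rw [if_pos hh]
          have hcc := hinv h' hh (g * h'⁻¹)
          rw [inv_mul_cancel_right] at hcc
          exact hcc.symm
        · rw [if_neg hh]
          by_contra hne
          have hmem : g * h'⁻¹ ∈ α.coeff.support := Finsupp.mem_support_iff.mpr hne
          have := hcase _ hmem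
          apply hh
          have hinH : g⁻¹ * (g * h'⁻¹) ∈ H := this
          rw [inv_mul_cancel_left] at hinH
          simpa using H.inv_mem hinH
      have hsum : ∑ h' ∈ (H' : Set G).toFinite.toFinset, α.coeff (g * h'⁻¹) =
          (Nat.card H : R) * α.coeff g := by
        rw [Finset.sum_congr rfl hterm, ← Finset.sum_filter]
        have hfil : ((H' : Set G).toFinite.toFinset).filter (· ∈ H) = T := by
          ext x
          simp only [Finset.mem_filter, Set.Finite.mem_toFinset, SetLike.mem_coe, hmemT]
          exact ⟨fun h => h.2, fun h => ⟨hHH' h, h⟩⟩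
        rw [hfil, Finset.sum_const, hT, card_toFinset, nsmul_eq_mul]
      rw [hexp, hsum] at hval
      have : α.coeff g = 0 := by
        have h2 : u * ((Nat.card H : R) * α.coeff g) = 0 := by rw [hval, mul_zero]
        rwa [← mul_assoc, hcard1, one_mul] at h2
      exact hgne this
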